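/- (Variant loss with powers.) Let α, β > 0, let Σ ⊆ X, and let δ, μ > 0 satisfy δ^α ≤ μ². Assume every f ∈ K admits g ∈ Σ ∩ K with ‖f − g‖_X ≤ δ. Let f ∈ K and w := λ(f). Suppose f̂ = ι(ĥ) with ĥ ∈ Y and ι(ĥ) ∈ Σ minimizes the loss L'_μ: ‖λ(ι(ĥ)) − w‖^α + μ‖ĥ‖_Y^β ≤ ‖λ(ι(h)) − w‖^α + μ‖h‖_Y^β for every h ∈ Y with ι(h) ∈ Σ. Then, with ε := max( C₀((1+μ)^{1/β} − 1), (μ² + μ)^{1/α} ), one has ‖f − f̂‖_X ≤ ε + 2 R(K(w, 2ε))_X. -/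

import Mathlib

/-- Chebyshev radius of a set `S` in a normed space `X`:
`R(S) = inf_{z ∈ X} sup_{f ∈ S} ‖f - z‖`. -/
noncomputable def chebRad {X : Type*} [NormedAddCommGroup X] (S : Set X) : ℝ :=
  ⨅ z : X, ⨆ f : S, ‖(f : X) - z‖

/-- Weighted euclidean norm on `ℝ^m`: `‖v‖ = ( m⁻¹ ∑ v_j² )^{1/2}`. -/
noncomputable def wNorm {m : ℕ} (v : Fin m → ℝ) : ℝ :=
  Real.sqrt ((∑ j, v j ^ 2) / m)

lemma wNorm_nonneg {m : ℕ} (v : Fin m → ℝ) : 0 ≤ wNorm v := Real.sqrt_nonneg _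

lemma wNorm_eq_norm {m : ℕ} (v : Fin m → ℝ) :
    wNorm v = ‖(WithLp.equiv 2 (Fin m → ℝ)).symm v‖ / Real.sqrt m := by
  rw [wNorm, EuclideanSpace.norm_eq, Real.sqrt_div (by positivity)]
  simp [sq_abs]

lemma wNorm_add_le {m : ℕ} (v w : Fin m → ℝ) : wNorm (v + w) ≤ wNorm v + wNorm w := by
  rw [wNorm_eq_norm, wNorm_eq_norm, wNorm_eq_norm, ← add_div]
  have h : (WithLp.equiv 2 (Fin m → ℝ)).symm (v + w)
      = (WithLp.equiv 2 (Fin m → ℝ)).symm v + (WithLp.equiv 2 (Fin m → ℝ)).symm w := rfl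
  rw [h]
  gcongr
  exact norm_add_le _ _

lemma wNorm_sub_le {m : ℕ} (a b c : Fin m → ℝ) :
    wNorm (fun j => a j - c j) ≤ wNorm (fun j => a j - b j) + wNorm (fun j => b j - c j) := by
  have h : (fun j => a j - c j) = (fun j => a j - b j) + fun j => b j - c j := by
    funext j; simp only [Pi.add_apply]; ring
  rw [h]; exact wNorm_add_le _ _

lemma wNorm_le_of_abs_le {m : ℕ} {v : Fin m → ℝ} {C : ℝ} (hC : 0 ≤ C)
    (h : ∀ j, |v j| ≤ C) : wNorm v ≤ C := by
  rcases Nat.eq_zero_or_pos m with hm | hm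
  · subst hm; simp [wNorm, hC]
  · rw [wNorm]
    have hsum : (∑ j, v j ^ 2) ≤ m * C ^ 2 := by
      calc (∑ j, v j ^ 2) ≤ ∑ _j : Fin m, C ^ 2 := by
            apply Finset.sum_le_sum
            intro j _
            have := h j
            nlinarith [abs_nonneg (v j), sq_abs (v j)]
        _ = m * C ^ 2 := by simp [mul_comm]
    have : (∑ j, v j ^ 2) / m ≤ C ^ 2 := by
      rw [div_le_iff₀ (by positivity)]
      linarith [hsum]
    calc Real.sqrt ((∑ j, v j ^ 2) / m) ≤ Real.sqrt (C ^ 2) := Real.sqrt_le_sqrt this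
      _ = C := Real.sqrt_sq hC

/-- Variant loss with powers: a minimizer of
`g ↦ ‖λ(g) − w‖^α + μ‖g‖_Y^β` over `Σ` satisfies, with
`ε := max( C₀((1+μ)^{1/β} − 1), (μ²+μ)^{1/α} )`,
`‖f − f̂‖_X ≤ ε + 2 R(K(w, 2ε))_X`. -/
theorem stmt_11
    {X Y : Type*} [NormedAddCommGroup X] [NormedSpace ℝ X] [CompleteSpace X]
    [NormedAddCommGroup Y] [NormedSpace ℝ Y]
    {m : ℕ} (hm : 0 < m)
    (lam : Fin m → X →L[ℝ] ℝ) (hlam : ∀ j, ‖lam j‖ ≤ 1)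
    (ι : Y →ₗ[ℝ] X) (hι : Function.Injective ι)
    (C₀ : ℝ) (hC₀ : ∀ g : Y, ‖ι g‖ ≤ C₀ * ‖g‖)
    (hK : IsCompact (ι '' {g : Y | ‖g‖ ≤ 1}))
    (α β : ℝ) (hα : 0 < α) (hβ : 0 < β)
    (Sig : Set X) (δ μ : ℝ) (hδ : 0 < δ) (hμ : 0 < μ) (hδμ : δ ^ α ≤ μ ^ 2)
    (happrox : ∀ f ∈ ι '' {g : Y | ‖g‖ ≤ 1},
      ∃ g ∈ Sig ∩ ι '' {g : Y | ‖g‖ ≤ 1}, ‖f - g‖ ≤ δ)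
    (f : X) (hf : f ∈ ι '' {g : Y | ‖g‖ ≤ 1})
    (fhat : Y) (hfhat : ι fhat ∈ Sig)
    (hmin : ∀ h : Y, ι h ∈ Sig →
      wNorm (fun j => lam j (ι fhat) - lam j f) ^ α + μ * ‖fhat‖ ^ β ≤
        wNorm (fun j => lam j (ι h) - lam j f) ^ α + μ * ‖h‖ ^ β) :
    ‖f - ι fhat‖ ≤
      max (C₀ * ((1 + μ) ^ (1 / β) - 1)) ((μ ^ 2 + μ) ^ (1 / α)) +
      2 * chebRad {u ∈ ι '' {g : Y | ‖g‖ ≤ 1} |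
        wNorm (fun j => lam j u - lam j f) ≤
          2 * max (C₀ * ((1 + μ) ^ (1 / β) - 1)) ((μ ^ 2 + μ) ^ (1 / α))} := by
  set ε : ℝ := max (C₀ * ((1 + μ) ^ (1 / β) - 1)) ((μ ^ 2 + μ) ^ (1 / α)) with hε
  have hεα : (0:ℝ) < (μ ^ 2 + μ) ^ (1 / α) := Real.rpow_pos_of_pos (by positivity) _
  have hεpos : 0 < ε := lt_of_lt_of_le hεα (le_max_right _ _)
  -- key bound on λ for points of X
  have hwlam : ∀ u v : X, wNorm (fun j => lam j u - lam j v) ≤ ‖u - v‖ := by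
    intro u v
    apply wNorm_le_of_abs_le (norm_nonneg _)
    intro j
    have h1 : lam j u - lam j v = lam j (u - v) := by simp
    rw [h1]
    calc |lam j (u - v)| = ‖lam j (u - v)‖ := rfl
      _ ≤ ‖lam j‖ * ‖u - v‖ := (lam j).le_opNorm _
      _ ≤ 1 * ‖u - v‖ := by gcongr; exact hlam j
      _ = ‖u - v‖ := one_mul _
  -- the approximant to f in Sig ∩ K
  obtain ⟨g, ⟨hgSig, hgK⟩, hgδ⟩ := happrox f hf
  obtain ⟨h, hh1, rfl⟩ := hgK
  have hwh : wNorm (fun j => lam j (ι h) - lam j f) ≤ δ := by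
    calc wNorm (fun j => lam j (ι h) - lam j f) ≤ ‖ι h - f‖ := hwlam _ _
      _ = ‖f - ι h‖ := norm_sub_rev _ _
      _ ≤ δ := hgδ
  have hAB := hmin h hgSig
  have hAnn : (0:ℝ) ≤ wNorm (fun j => lam j (ι fhat) - lam j f) ^ α :=
    Real.rpow_nonneg (wNorm_nonneg _) _
  have hBnn : (0:ℝ) ≤ μ * ‖fhat‖ ^ β :=
    mul_nonneg hμ.le (Real.rpow_nonneg (norm_nonneg _) _)
  have hhβ : ‖h‖ ^ β ≤ 1 := Real.rpow_le_one (norm_nonneg _) hh1 hβ.le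
  have hδα : wNorm (fun j => lam j (ι h) - lam j f) ^ α ≤ δ ^ α :=
    Real.rpow_le_rpow (wNorm_nonneg _) hwh hα.le
  have hsum : wNorm (fun j => lam j (ι fhat) - lam j f) ^ α + μ * ‖fhat‖ ^ β ≤ μ ^ 2 + μ := by
    have h2 : μ * ‖h‖ ^ β ≤ μ * 1 := by gcongr
    calc wNorm (fun j => lam j (ι fhat) - lam j f) ^ α + μ * ‖fhat‖ ^ β
        ≤ wNorm (fun j => lam j (ι h) - lam j f) ^ α + μ * ‖h‖ ^ β := hAB
      _ ≤ δ ^ α + μ * 1 := by linarith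
      _ ≤ μ ^ 2 + μ := by linarith
  -- bound on λ(fhat) - w
  have hwfhat : wNorm (fun j => lam j (ι fhat) - lam j f) ≤ ε := by
    have hA : wNorm (fun j => lam j (ι fhat) - lam j f) ^ α ≤ μ ^ 2 + μ := by linarith
    have := Real.rpow_le_rpow hAnn hA (by positivity : (0:ℝ) ≤ α⁻¹)
    rw [Real.rpow_rpow_inv (wNorm_nonneg _) hα.ne'] at this
    calc wNorm (fun j => lam j (ι fhat) - lam j f) ≤ (μ ^ 2 + μ) ^ α⁻¹ := this
      _ = (μ ^ 2 + μ) ^ (1 / α) := by rw [one_div]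
      _ ≤ ε := le_max_right _ _
  -- bound on ‖fhat‖
  have hfhatβ : ‖fhat‖ ≤ (1 + μ) ^ (1 / β) := by
    have hB : μ * ‖fhat‖ ^ β ≤ μ ^ 2 + μ := by linarith
    have h1 : ‖fhat‖ ^ β ≤ 1 + μ := by
      rw [← mul_le_mul_iff_right₀ hμ]
      calc μ * ‖fhat‖ ^ β ≤ μ ^ 2 + μ := hB
        _ = μ * (1 + μ) := by ring
    have := Real.rpow_le_rpow (Real.rpow_nonneg (norm_nonneg _) _) h1
      (by positivity : (0:ℝ) ≤ β⁻¹)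
    rw [Real.rpow_rpow_inv (norm_nonneg _) hβ.ne'] at this
    rw [one_div]; exact this
  -- project fhat to the unit ball
  obtain ⟨h', hh'1, hh'ε⟩ : ∃ h' : Y, ‖h'‖ ≤ 1 ∧ ‖ι fhat - ι h'‖ ≤ ε := by
    by_cases hcase : ‖fhat‖ ≤ 1
    · exact ⟨fhat, hcase, by simp [hεpos.le]⟩
    · push_neg at hcase
      have hfpos : (0:ℝ) < ‖fhat‖ := lt_trans one_pos hcase
      refine ⟨‖fhat‖⁻¹ • fhat, ?_, ?_⟩
      · rw [norm_smul, norm_inv, norm_norm, inv_mul_cancel₀ hfpos.ne']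
      · have hC₀nn : 0 ≤ C₀ := by
          have := hC₀ fhat
          nlinarith [norm_nonneg (ι fhat)]
        have hmap : ι (‖fhat‖⁻¹ • fhat) = ‖fhat‖⁻¹ • ι fhat := map_smul ι _ _
        rw [hmap]
        have heq : ι fhat - ‖fhat‖⁻¹ • ι fhat = (1 - ‖fhat‖⁻¹) • ι fhat := by
          rw [sub_smul, one_smul]
        rw [heq, norm_smul, Real.norm_eq_abs]
        have hinv1 : ‖fhat‖⁻¹ ≤ 1 := inv_le_one_of_one_le₀ hcase.le
        have habs : |1 - ‖fhat‖⁻¹| = 1 - ‖fhat‖⁻¹ := abs_of_nonneg (by linarith)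
        rw [habs]
        have hone : (1:ℝ) ≤ (1 + μ) ^ (1 / β) := by
          calc (1:ℝ) = 1 ^ (1/β) := (Real.one_rpow _).symm
            _ ≤ (1 + μ) ^ (1/β) := Real.rpow_le_rpow zero_le_one (by linarith) (by positivity)
        calc (1 - ‖fhat‖⁻¹) * ‖ι fhat‖ ≤ (1 - ‖fhat‖⁻¹) * (C₀ * ‖fhat‖) :=
              mul_le_mul_of_nonneg_left (hC₀ fhat) (by linarith)
          _ = C₀ * (‖fhat‖ - 1) := by
              field_simp
          _ ≤ C₀ * ((1 + μ) ^ (1 / β) - 1) := by gcongr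
          _ ≤ ε := le_max_left _ _
  -- ι h' and f are in the tube set S
  set S : Set X := {u ∈ ι '' {g : Y | ‖g‖ ≤ 1} |
      wNorm (fun j => lam j u - lam j f) ≤ 2 * ε} with hS
  have hfS : f ∈ S := by
    refine ⟨hf, ?_⟩
    have : (fun j => lam j f - lam j f) = fun _ => (0:ℝ) := by funext j; ring
    rw [this]
    have h0 : wNorm (fun _ : Fin m => (0:ℝ)) = 0 := by simp [wNorm]
    rw [h0]
    positivity
  have hh'S : ι h' ∈ S := by
    refine ⟨⟨h', hh'1, rfl⟩, ?_⟩
    calc wNorm (fun j => lam j (ι h') - lam j f)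
        ≤ wNorm (fun j => lam j (ι h') - lam j (ι fhat)) +
          wNorm (fun j => lam j (ι fhat) - lam j f) := wNorm_sub_le _ _ _
      _ ≤ ‖ι h' - ι fhat‖ + ε := add_le_add (hwlam _ _) hwfhat
      _ = ‖ι fhat - ι h'‖ + ε := by rw [norm_sub_rev]
      _ ≤ ε + ε := by linarith
      _ = 2 * ε := by ring
  -- Chebyshev radius bound
  have hcheb : ‖f - ι h'‖ ≤ 2 * chebRad S := by
    have hkey : ∀ z : X, ‖f - ι h'‖ / 2 ≤ ⨆ u : S, ‖(u : X) - z‖ := by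
      intro z
      have hbdd : BddAbove (Set.range fun u : S => ‖(u : X) - z‖) := by
        obtain ⟨r, hr⟩ := hK.isBounded.subset_closedBall z
        refine ⟨r, ?_⟩
        rintro x ⟨u, rfl⟩
        show ‖(u : X) - z‖ ≤ r
        have hu : (u : X) ∈ Metric.closedBall z r := hr u.2.1
        rw [Metric.mem_closedBall] at hu
        rw [← dist_eq_norm]
        exact hu
      have h1 : ‖f - z‖ ≤ ⨆ u : S, ‖(u : X) - z‖ := le_ciSup hbdd ⟨f, hfS⟩
      have h2 : ‖ι h' - z‖ ≤ ⨆ u : S, ‖(u : X) - z‖ := le_ciSup hbdd ⟨ι h', hh'S⟩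
      have h3 : ‖f - ι h'‖ ≤ ‖f - z‖ + ‖ι h' - z‖ := by
        have : f - ι h' = (f - z) - (ι h' - z) := by abel
        rw [this]
        exact norm_sub_le _ _
      linarith
    have : ‖f - ι h'‖ / 2 ≤ chebRad S := le_ciInf hkey
    linarith
  -- combine
  calc ‖f - ι fhat‖ ≤ ‖f - ι h'‖ + ‖ι h' - ι fhat‖ := by
        have : f - ι fhat = (f - ι h') + (ι h' - ι fhat) := by abel
        rw [this]; exact norm_add_le _ _
    _ = ‖f - ι h'‖ + ‖ι fhat - ι h'‖ := by rw [norm_sub_rev (ι h')]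
    _ ≤ 2 * chebRad S + ε := add_le_add hcheb hh'ε
    _ = ε + 2 * chebRad S := by ring
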